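/- Let Γ be the central extension 1 → ℤ → Γ → ℤ² → 1 with k-invariant e₁*∧e₂* (the integral Heisenberg group, with presentation ⟨a₁,a₂,x : [a₁,a₂] = x, x central⟩). A homomorphism f: Γ → U(m) sends x to a unitary matrix X whose eigenvalues are all roots of unity; moreover if λ is an eigenvalue of X with eigenspace of dimension k, then λ^k = 1. -/

import Mathlib

open scoped commutatorElement

/-- The relations of the integral Heisenberg group `⟨a₁, a₂, x : [a₁,a₂] = x, x central⟩`,
with generators `0 ↦ a₁`, `1 ↦ a₂`, `2 ↦ x`. -/
def heisenbergRels : Set (FreeGroup (Fin 3)) :=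
  {⁅FreeGroup.of (0 : Fin 3), FreeGroup.of (1 : Fin 3)⁆ * (FreeGroup.of (2 : Fin 3))⁻¹,
   ⁅FreeGroup.of (2 : Fin 3), FreeGroup.of (0 : Fin 3)⁆,
   ⁅FreeGroup.of (2 : Fin 3), FreeGroup.of (1 : Fin 3)⁆}

/-- The integral Heisenberg group, i.e. the central extension `1 → ℤ → Γ₁ → ℤ² → 1` with
k-invariant `e₁* ∧ e₂*`. -/
def HeisenbergGroup : Type := PresentedGroup heisenbergRels

instance : Group HeisenbergGroup := by unfold HeisenbergGroup; infer_instance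

lemma heisenberg_rel_eq_one (r : FreeGroup (Fin 3)) (hr : r ∈ heisenbergRels) :
    (QuotientGroup.mk r : PresentedGroup heisenbergRels) = 1 := by
  rw [QuotientGroup.eq_one_iff]
  exact Subgroup.subset_normalClosure hr

/-- Key linear-algebra lemma: if `A1 * A2 = X * (A2 * A1)`, `X` commutes with `A1, A2`,
and `A1, A2` are left-invertible, then every eigenvalue `lam` of `X` satisfies
`lam ^ (dim eigenspace) = 1`. -/
lemma heis_key (m : ℕ) (A1 A2 X C1 C2 : Matrix (Fin m) (Fin m) ℂ)
    (h12 : A1 * A2 = X * (A2 * A1))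
    (hc1 : X * A1 = A1 * X) (hc2 : X * A2 = A2 * X)
    (hC1 : C1 * A1 = 1) (hC2 : C2 * A2 = 1)
    (lam : ℂ) :
    lam ^ (Module.finrank ℂ (Module.End.eigenspace (Matrix.mulVecLin X) lam)) = 1 := by
  set T := Matrix.mulVecLin X with hT
  set T1 := Matrix.mulVecLin A1 with hT1
  set T2 := Matrix.mulVecLin A2 with hT2
  set E := Module.End.eigenspace T lam with hE
  have comp_of_mul : ∀ (P Q : Matrix (Fin m) (Fin m) ℂ) (v : Fin m → ℂ),
      (P * Q).mulVecLin v = P.mulVecLin (Q.mulVecLin v) := by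
    intro P Q v; rw [Matrix.mulVecLin_mul]; rfl
  have hE1 : ∀ v ∈ E, T1 v ∈ E := by
    intro v hv
    rw [Module.End.mem_eigenspace_iff] at hv ⊢
    have := congrArg (fun M => Matrix.mulVecLin M v) hc1
    simp only [comp_of_mul] at this
    rw [show T (T1 v) = T1 (T v) from this, hv, map_smul]
  have hE2 : ∀ v ∈ E, T2 v ∈ E := by
    intro v hv
    rw [Module.End.mem_eigenspace_iff] at hv ⊢
    have := congrArg (fun M => Matrix.mulVecLin M v) hc2
    simp only [comp_of_mul] at this
    rw [show T (T2 v) = T2 (T v) from this, hv, map_smul]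
  set B1 := T1.restrict hE1 with hB1
  set B2 := T2.restrict hE2 with hB2
  have hcomp : B1 ∘ₗ B2 = lam • (B2 ∘ₗ B1) := by
    refine LinearMap.ext fun v => Subtype.ext ?_
    have hmem : T (T2 (T1 (v : Fin m → ℂ))) = lam • T2 (T1 (v : Fin m → ℂ)) := by
      have := hE2 _ (hE1 _ v.2)
      rwa [Module.End.mem_eigenspace_iff] at this
    have h12' := congrArg (fun M => Matrix.mulVecLin M (v : Fin m → ℂ)) h12
    simp only [comp_of_mul] at h12'
    simp only [hB1, hB2, LinearMap.coe_comp, Function.comp_apply, LinearMap.smul_apply,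
      SetLike.val_smul, LinearMap.restrict_coe_apply]
    rw [hT1, hT2, h12']
    exact hmem
  have hinj : ∀ (A C : Matrix (Fin m) (Fin m) ℂ), C * A = 1 →
      Function.Injective (Matrix.mulVecLin A) := by
    intro A C hCA v w hvw
    have := congrArg (C.mulVecLin) hvw
    rw [← comp_of_mul, ← comp_of_mul, hCA] at this
    simpa using this
  have hdet_ne : ∀ (A C : Matrix (Fin m) (Fin m) ℂ) (hCA : C * A = 1)
      (hpres : ∀ v ∈ E, A.mulVecLin v ∈ E),
      LinearMap.det (A.mulVecLin.restrict hpres) ≠ 0 := by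
    intro A C hCA hpres hdet
    have hk := LinearMap.bot_lt_ker_of_det_eq_zero hdet
    have : Function.Injective (A.mulVecLin.restrict hpres) := by
      intro v w hvw
      have : A.mulVecLin (v : Fin m → ℂ) = A.mulVecLin (w : Fin m → ℂ) := by
        have := congrArg (Subtype.val) hvw
        simpa [LinearMap.restrict_coe_apply] using this
      exact Subtype.ext (hinj A C hCA this)
    rw [LinearMap.ker_eq_bot.mpr this] at hk
    exact absurd hk (lt_irrefl _)
  have hd1 : LinearMap.det B1 ≠ 0 := hdet_ne A1 C1 hC1 hE1
  have hd2 : LinearMap.det B2 ≠ 0 := hdet_ne A2 C2 hC2 hE2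
  have hdets := congrArg LinearMap.det hcomp
  rw [LinearMap.det_comp, LinearMap.det_smul, LinearMap.det_comp] at hdets
  have h1 : lam ^ (Module.finrank ℂ E) * (LinearMap.det B2 * LinearMap.det B1)
      = 1 * (LinearMap.det B2 * LinearMap.det B1) := by
    rw [one_mul, ← hdets]; ring
  exact mul_right_cancel₀ (mul_ne_zero hd2 hd1) h1

/-- A homomorphism `f : Γ₁ → U(m)` from the integral Heisenberg group sends the central
generator `x` to a unitary matrix `X` all of whose eigenvalues are roots of unity;
moreover if `λ` is an eigenvalue of `X` with eigenspace of dimension `k` then `λ^k = 1`. -/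
theorem heisenberg_central_eigenvalues (m : ℕ)
    (f : HeisenbergGroup →* Matrix.unitaryGroup (Fin m) ℂ)
    (X : Matrix (Fin m) (Fin m) ℂ)
    (hXf : X = ((f (PresentedGroup.of (2 : Fin 3) : PresentedGroup heisenbergRels)) :
      Matrix (Fin m) (Fin m) ℂ))
    (lam : ℂ) (hlam : Module.End.HasEigenvalue (Matrix.mulVecLin X) lam) :
    lam ^ (Module.finrank ℂ (Module.End.eigenspace (Matrix.mulVecLin X) lam)) = 1 ∧
    ∃ N : ℕ, 0 < N ∧ lam ^ N = 1 := by
  set a1 : HeisenbergGroup := PresentedGroup.of (0 : Fin 3) with ha1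
  set a2 : HeisenbergGroup := PresentedGroup.of (1 : Fin 3) with ha2
  set x : HeisenbergGroup := PresentedGroup.of (2 : Fin 3) with hx
  have hrel1 : ⁅a1, a2⁆ * x⁻¹ = 1 := by
    have := heisenberg_rel_eq_one _ (by left; rfl)
    exact this
  have hrel2 : ⁅x, a1⁆ = 1 := by
    have := heisenberg_rel_eq_one _ (by right; left; rfl)
    exact this
  have hrel3 : ⁅x, a2⁆ = 1 := by
    have := heisenberg_rel_eq_one _ (by right; right; rfl)
    exact this
  -- group-level consequences, without inverses
  have hcomm : ⁅a1, a2⁆ = x := mul_inv_eq_one.mp hrel1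
  have h12 : a1 * a2 = x * (a2 * a1) := by
    rw [← hcomm, commutatorElement_def]; group
  have hc1 : x * a1 = a1 * x := commutatorElement_eq_one_iff_mul_comm.mp hrel2
  have hc2 : x * a2 = a2 * x := commutatorElement_eq_one_iff_mul_comm.mp hrel3
  -- matrix-level consequences
  have toMat : ∀ g h : HeisenbergGroup, g = h →
      ((f g : Matrix.unitaryGroup (Fin m) ℂ) : Matrix (Fin m) (Fin m) ℂ)
        = ((f h : Matrix.unitaryGroup (Fin m) ℂ) : Matrix (Fin m) (Fin m) ℂ) := by
    intro g h hgh; rw [hgh]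
  set A1 : Matrix (Fin m) (Fin m) ℂ := ((f a1 : Matrix.unitaryGroup (Fin m) ℂ) : Matrix (Fin m) (Fin m) ℂ) with hA1
  set A2 : Matrix (Fin m) (Fin m) ℂ := ((f a2 : Matrix.unitaryGroup (Fin m) ℂ) : Matrix (Fin m) (Fin m) ℂ) with hA2
  have hXm : X = ((f x : Matrix.unitaryGroup (Fin m) ℂ) : Matrix (Fin m) (Fin m) ℂ) := hXf
  have hm12 : A1 * A2 = X * (A2 * A1) := by
    have := toMat _ _ h12
    simpa [map_mul, hXm] using this
  have hmc1 : X * A1 = A1 * X := by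
    have := toMat _ _ hc1
    simpa [map_mul, hXm] using this
  have hmc2 : X * A2 = A2 * X := by
    have := toMat _ _ hc2
    simpa [map_mul, hXm] using this
  set C1 : Matrix (Fin m) (Fin m) ℂ := (((f a1)⁻¹ : Matrix.unitaryGroup (Fin m) ℂ) : Matrix (Fin m) (Fin m) ℂ) with hC1'
  set C2 : Matrix (Fin m) (Fin m) ℂ := (((f a2)⁻¹ : Matrix.unitaryGroup (Fin m) ℂ) : Matrix (Fin m) (Fin m) ℂ) with hC2'
  have hC1 : C1 * A1 = 1 := by
    rw [hC1', hA1, ← Submonoid.coe_mul, inv_mul_cancel]; rfl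
  have hC2 : C2 * A2 = 1 := by
    rw [hC2', hA2, ← Submonoid.coe_mul, inv_mul_cancel]; rfl
  have hkey := heis_key m A1 A2 X C1 C2 hm12 hmc1 hmc2 hC1 hC2 lam
  refine ⟨hkey, Module.finrank ℂ (Module.End.eigenspace (Matrix.mulVecLin X) lam), ?_, hkey⟩
  have hne : Module.End.eigenspace (Matrix.mulVecLin X) lam ≠ ⊥ := hlam
  have : Nontrivial (Module.End.eigenspace (Matrix.mulVecLin X) lam) :=
    Submodule.nontrivial_iff_ne_bot.mpr hne
  exact Module.finrank_pos
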